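/- The holomorphic vector field X = −zζ∂/∂z + (1−ζ^2)∂/∂ζ + iz^2∂/∂w is an infinitesimal automorphism of the model hypersurface {Im w = P}: Re( (1/(2i))·iz^2 + zζ·P_z − (1−ζ^2)·P_ζ ) = 0 identically in (z,ζ,\bar z,\bar ζ) with |ζ|<1. -/

import Mathlib

open Complex

noncomputable def P4 (z ζ zb ζb : ℂ) : ℂ :=
  (z * zb + (z ^ 2 * ζb + zb ^ 2 * ζ) / 2) / (1 - ζ * ζb)

noncomputable def Pz (z ζ zb ζb : ℂ) : ℂ :=
  deriv (fun s => P4 s ζ zb ζb) z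

noncomputable def Pzeta (z ζ zb ζb : ℂ) : ℂ :=
  deriv (fun s => P4 z s zb ζb) ζ

lemma Pz_eq (z ζ zb ζb : ℂ) :
    Pz z ζ zb ζb = (zb + z * ζb) / (1 - ζ * ζb) := by
  have h1 : HasDerivAt (fun s : ℂ => s * zb + (s ^ 2 * ζb + zb ^ 2 * ζ) / 2)
      (zb + z * ζb) z := by
    have := ((hasDerivAt_id z).mul_const zb).add
      ((((hasDerivAt_pow 2 z).mul_const ζb).add_const (zb ^ 2 * ζ)).div_const 2)
    refine this.congr_deriv ?_
    ring
  have h2 := h1.div_const (1 - ζ * ζb)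
  unfold Pz P4
  exact h2.deriv

lemma Pzeta_eq (z ζ zb ζb : ℂ) (h : 1 - ζ * ζb ≠ 0) :
    Pzeta z ζ zb ζb =
      ((zb ^ 2 / 2) * (1 - ζ * ζb) - (z * zb + (z ^ 2 * ζb + zb ^ 2 * ζ) / 2) * (-ζb))
        / (1 - ζ * ζb) ^ 2 := by
  have hnum : HasDerivAt (fun s : ℂ => z * zb + (z ^ 2 * ζb + zb ^ 2 * s) / 2)
      (zb ^ 2 / 2) ζ := by
    have := (((hasDerivAt_id ζ).const_mul (zb ^ 2)).const_add (z ^ 2 * ζb)).div_const 2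
    have := this.const_add (z * zb)
    refine this.congr_deriv ?_
    ring
  have hden : HasDerivAt (fun s : ℂ => 1 - s * ζb) (-ζb) ζ := by
    have := ((hasDerivAt_id ζ).mul_const ζb).const_sub 1
    refine this.congr_deriv ?_
    ring
  have h3 := hnum.div hden h
  unfold Pzeta P4
  exact h3.deriv

/-- the field `X = -zζ∂/∂z + (1-ζ²)∂/∂ζ + iz²∂/∂w` is an
infinitesimal automorphism of `{Im w = P}`:
`Re((1/(2i))·iz² + zζ·P_z - (1-ζ²)·P_ζ) = 0` identically for `|ζ|<1`. -/
theorem infinitesimal_autom_g0s (z ζ : ℂ) (hζ : ‖ζ‖ < 1) :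
    ((1 / (2 * I)) * (I * z ^ 2) + z * ζ * Pz z ζ ((starRingEnd ℂ) z) ((starRingEnd ℂ) ζ)
      - (1 - ζ ^ 2) * Pzeta z ζ ((starRingEnd ℂ) z) ((starRingEnd ℂ) ζ)).re = 0 := by
  set zb := (starRingEnd ℂ) z with hzb
  set ζb := (starRingEnd ℂ) ζ with hζb
  have h : 1 - ζ * ζb ≠ 0 := by
    intro heq
    have : ζ * ζb = 1 := by linear_combination -heq
    have habs : ‖ζ * ζb‖ = 1 := by rw [this]; simp
    rw [norm_mul, hζb, Complex.norm_conj] at habs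
    nlinarith [norm_nonneg ζ]
  have h' : 1 - ζb * ζ ≠ 0 := by rwa [mul_comm]
  rw [Pz_eq, Pzeta_eq z ζ zb ζb h]
  set E : ℂ := (1 / (2 * I)) * (I * z ^ 2) + z * ζ * ((zb + z * ζb) / (1 - ζ * ζb))
      - (1 - ζ ^ 2) * (((zb ^ 2 / 2) * (1 - ζ * ζb)
        - (z * zb + (z ^ 2 * ζb + zb ^ 2 * ζ) / 2) * (-ζb)) / (1 - ζ * ζb) ^ 2) with hE
  have key : E + (starRingEnd ℂ) E = 0 := by
    rw [hE]
    simp only [map_add, map_sub, map_mul, map_div₀, map_one, map_pow, map_neg,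
      Complex.conj_conj, Complex.conj_I, map_ofNat, hzb, hζb]
    have hI : I ≠ 0 := Complex.I_ne_zero
    have h'' : 1 - ζ * (starRingEnd ℂ) ζ ≠ 0 := h
    field_simp
    ring
  have h2 := Complex.add_conj E
  rw [key] at h2
  have : (2 : ℝ) * E.re = 0 := by exact_mod_cast h2.symm
  linarith
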